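/- For all real x > 0 and integers n, n' ≥ 1, the polynomials Q_n(x) = Σ_{ν=0}^{n-1} S(n, n-ν) x^ν satisfy Q_n(x) · Q_{n'}(x) ≤ Q_{n+n'}(x). Moreover, coefficientwise: for every m ≥ 0, Σ_{i+j=m} S(n, n-i) · S(n', n'-j) ≤ S(n+n', n+n'-m). -/

import Mathlib

/-- Stirling numbers of the second kind. -/
def stirling2 : ℕ → ℕ → ℕ
  | 0, 0 => 1
  | 0, _ + 1 => 0
  | _ + 1, 0 => 0
  | n + 1, k + 1 => (k + 1) * stirling2 n (k + 1) + stirling2 n k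

lemma stirling2_eq_zero_of_lt : ∀ {n k : ℕ}, n < k → stirling2 n k = 0
  | 0, _+1, _ => rfl
  | n+1, k+1, h => by
      show (k + 1) * stirling2 n (k + 1) + stirling2 n k = 0
      rw [stirling2_eq_zero_of_lt (by omega), stirling2_eq_zero_of_lt (by omega)]
      ring

lemma stirling2_self (n : ℕ) : stirling2 n n = 1 := by
  induction n with
  | zero => rfl
  | succ n ih =>
      show (n + 1) * stirling2 n (n + 1) + stirling2 n n = 1
      rw [stirling2_eq_zero_of_lt (by omega), ih]; ring

lemma stirling2_zero (n : ℕ) (h : 1 ≤ n) : stirling2 n 0 = 0 := by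
  obtain ⟨k, rfl⟩ : ∃ k, n = k + 1 := ⟨n - 1, by omega⟩
  rfl

lemma stirling2_rec (n j : ℕ) (hn : 1 ≤ n) :
    stirling2 (n+1) (n+1-j) = (n+1-j) * stirling2 n (n+1-j) + stirling2 n (n-j) := by
  rcases le_or_gt j n with h | h
  · obtain ⟨k, rfl⟩ : ∃ k, n = j + k := ⟨n - j, by omega⟩
    have h1 : j + k + 1 - j = k + 1 := by omega
    have h2 : j + k - j = k := by omega
    rw [h1, h2]
    rfl
  · have h1 : n+1-j = 0 := by omega
    have h2 : n-j = 0 := by omega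
    rw [h1, h2, stirling2_zero n hn, stirling2_zero (n+1) (by omega)]

lemma stirling_key (n : ℕ) (hn : 1 ≤ n) : ∀ n', 1 ≤ n' → ∀ m : ℕ,
    ∑ i ∈ Finset.range (m+1), stirling2 n (n-i) * stirling2 n' (n'-(m-i))
      ≤ stirling2 (n+n') (n+n'-m) := by
  intro n' hn'
  induction n', hn' using Nat.le_induction with
  | base =>
      intro m
      have hsum : ∑ i ∈ Finset.range (m+1), stirling2 n (n-i) * stirling2 1 (1-(m-i))
          = stirling2 n (n-m) := by
        rw [Finset.sum_eq_single_of_mem m (Finset.self_mem_range_succ m)]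
        · rw [show m - m = 0 from by omega]
          simp [stirling2_self]
        · intro i hi hne
          have hi' : i < m := by
            have := Finset.mem_range.mp hi; omega
          rw [show 1 - (m - i) = 0 from by omega, stirling2_zero 1 le_rfl, Nat.mul_zero]
      rw [hsum, stirling2_rec n m hn]
      omega
  | succ n' hn' ih =>
      intro m
      have step : ∀ i ∈ Finset.range (m+1),
          stirling2 n (n-i) * stirling2 (n'+1) (n'+1-(m-i))
          = (n'+1-(m-i)) * (stirling2 n (n-i) * stirling2 n' (n'+1-(m-i)))
            + stirling2 n (n-i) * stirling2 n' (n'-(m-i)) := by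
        intro i _
        rw [stirling2_rec n' (m-i) hn']
        ring
      rw [Finset.sum_congr rfl step, Finset.sum_add_distrib]
      -- bound the first sum
      have h1 : ∑ i ∈ Finset.range (m+1),
          (n'+1-(m-i)) * (stirling2 n (n-i) * stirling2 n' (n'+1-(m-i)))
          ≤ (n+n'+1-m) * ∑ i ∈ Finset.range (m+1),
              stirling2 n (n-i) * stirling2 n' (n'+1-(m-i)) := by
        rw [Finset.mul_sum]
        apply Finset.sum_le_sum
        intro i _
        rcases le_or_gt n i with h | h
        · rw [show n - i = 0 from by omega, stirling2_zero n hn]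
          simp
        · exact Nat.mul_le_mul_right _ (by omega)
      have h2 : ∑ i ∈ Finset.range (m+1),
          stirling2 n (n-i) * stirling2 n' (n'+1-(m-i))
          ≤ stirling2 (n+n') (n+n'+1-m) := by
        cases m with
        | zero =>
            simp [stirling2_eq_zero_of_lt (show n' < n'+1 from by omega)]
        | succ m'' =>
            rw [Finset.sum_range_succ, show m''+1-(m''+1) = 0 from by omega,
              show n'+1-0 = n'+1 from rfl,
              stirling2_eq_zero_of_lt (show n' < n'+1 from by omega), Nat.mul_zero,
              Nat.add_zero]
            have hcong : ∀ i ∈ Finset.range (m''+1),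
                stirling2 n (n-i) * stirling2 n' (n'+1-(m''+1-i))
                = stirling2 n (n-i) * stirling2 n' (n'-(m''-i)) := by
              intro i hi
              have : i < m''+1 := Finset.mem_range.mp hi
              rw [show n'+1-(m''+1-i) = n'-(m''-i) from by omega]
            rw [Finset.sum_congr rfl hcong,
              show n+n'+1-(m''+1) = n+n'-m'' from by omega]
            exact ih m''
      calc ∑ i ∈ Finset.range (m+1),
            (n'+1-(m-i)) * (stirling2 n (n-i) * stirling2 n' (n'+1-(m-i)))
          + ∑ i ∈ Finset.range (m+1), stirling2 n (n-i) * stirling2 n' (n'-(m-i))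
          ≤ (n+n'+1-m) * stirling2 (n+n') (n+n'+1-m) + stirling2 (n+n') (n+n'-m) := by
            have := ih m
            have := Nat.mul_le_mul_left (n+n'+1-m) h2
            omega
        _ = stirling2 (n+n'+1) (n+n'+1-m) := by
            rw [stirling2_rec (n+n') m (by omega)]
        _ = stirling2 (n+(n'+1)) (n+(n'+1)-m) := by
            rw [show n+(n'+1) = n+n'+1 from by omega]

/-- `Q_n(x) = Σ_{ν=0}^{n-1} S(n, n-ν) x^ν`. -/
def QPoly (n : ℕ) (x : ℝ) : ℝ :=
  ∑ ν ∈ Finset.range n, (stirling2 n (n - ν) : ℝ) * x ^ ν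

noncomputable def SPoly (n : ℕ) : Polynomial ℝ :=
  ∑ ν ∈ Finset.range n, Polynomial.C (stirling2 n (n-ν) : ℝ) * Polynomial.X ^ ν

lemma eval_SPoly (n : ℕ) (x : ℝ) : (SPoly n).eval x = QPoly n x := by
  simp [SPoly, QPoly, Polynomial.eval_finset_sum]

lemma coeff_SPoly (n : ℕ) (hn : 1 ≤ n) (i : ℕ) :
    (SPoly n).coeff i = (stirling2 n (n-i) : ℝ) := by
  rw [SPoly, Polynomial.finset_sum_coeff]
  simp only [Polynomial.coeff_C_mul, Polynomial.coeff_X_pow, mul_ite, mul_one, mul_zero]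
  rw [Finset.sum_ite_eq (Finset.range n) i]
  split
  · rfl
  · next h =>
      have : n - i = 0 := by
        have := Finset.mem_range.not.mp h; omega
      rw [this, stirling2_zero n hn]
      simp

lemma natDegree_SPoly (n : ℕ) : (SPoly n).natDegree ≤ n - 1 := by
  apply Polynomial.natDegree_sum_le_of_forall_le
  intro ν hν
  refine le_trans (Polynomial.natDegree_C_mul_le _ _) ?_
  rw [Polynomial.natDegree_X_pow]
  have := Finset.mem_range.mp hν; omega

/-- for `n, n' ≥ 1`, `Q_n(x)·Q_{n'}(x) ≤ Q_{n+n'}(x)` for all real `x > 0`;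
moreover, coefficientwise, for every `m ≥ 0`,
`Σ_{i+j=m} S(n, n-i)·S(n', n'-j) ≤ S(n+n', n+n'-m)`. -/
theorem stmt14 (n n' : ℕ) (hn : 1 ≤ n) (hn' : 1 ≤ n') :
    (∀ x : ℝ, 0 < x → QPoly n x * QPoly n' x ≤ QPoly (n + n') x) ∧
    (∀ m : ℕ, ∑ i ∈ Finset.range (m + 1), stirling2 n (n - i) * stirling2 n' (n' - (m - i))
        ≤ stirling2 (n + n') (n + n' - m)) := by
  constructor
  · intro x hx
    have hdeg : (SPoly n * SPoly n').natDegree < n + n' := by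
      refine lt_of_le_of_lt Polynomial.natDegree_mul_le ?_
      have h1 := natDegree_SPoly n
      have h2 := natDegree_SPoly n'
      omega
    have h1 : QPoly n x * QPoly n' x
        = ∑ m ∈ Finset.range (n+n'), ((SPoly n * SPoly n').coeff m) * x ^ m := by
      rw [← eval_SPoly, ← eval_SPoly, ← Polynomial.eval_mul]
      exact Polynomial.eval_eq_sum_range' hdeg x
    rw [h1, QPoly]
    apply Finset.sum_le_sum
    intro m _
    have hcoeff : (SPoly n * SPoly n').coeff m
        = ((∑ i ∈ Finset.range (m+1), stirling2 n (n-i) * stirling2 n' (n'-(m-i)) : ℕ) : ℝ) := by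
      rw [Polynomial.coeff_mul, Finset.Nat.sum_antidiagonal_eq_sum_range_succ_mk]
      push_cast
      exact Finset.sum_congr rfl fun i _ => by
        rw [coeff_SPoly n hn, coeff_SPoly n' hn']
    rw [hcoeff]
    apply mul_le_mul_of_nonneg_right _ (pow_nonneg hx.le m)
    exact_mod_cast stirling_key n hn n' hn' m
  · exact stirling_key n hn n' hn'
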